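/- arXiv:1001.3429 — 4 statements merged into one kernel-verified Lean document; each statement's English description precedes it below -/
import Mathlib

section
/- Let p, q : ℤ → ℝ be functions and k : ℤ, with 1 + |p(t)| + |q(t)| ≤ K for all t ≥ t₀ for some constant K ≥ 1. Suppose y : ℤ → ℝ satisfies Δ²y(t) + p(t)Δy(t) + q(t)y(t) = 0 for all t ≥ t₀, where Δy(t) = y(t+1) − y(t). Then y(t)² + (Δy(t))² ≤ (y(t₀)² + (Δy(t₀))²) · ((1 + 2K + 2K²)^(t − t₀)) for all t ≥ t₀. -/
theorem stmt_4 (p q : ℤ → ℝ) (t₀ : ℤ) (K : ℝ) (hK : 1 ≤ K)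
    (hb : ∀ t, t₀ ≤ t → 1 + |p t| + |q t| ≤ K)
    (y : ℤ → ℝ)
    (hode : ∀ t, t₀ ≤ t →
      (y (t + 2) - 2 * y (t + 1) + y t) + p t * (y (t + 1) - y t) + q t * y t = 0) :
    ∀ t, t₀ ≤ t →
      (y t) ^ 2 + (y (t + 1) - y t) ^ 2 ≤
        ((y t₀) ^ 2 + (y (t₀ + 1) - y t₀) ^ 2) * (1 + 2 * K + 2 * K ^ 2) ^ (t - t₀) := by
  have hpos : (0:ℝ) < 1 + 2 * K + 2 * K ^ 2 := by nlinarith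
  refine Int.le_induction ?_ ?_
  · rw [sub_self, zpow_zero, mul_one]
  · intro t ht ih
    have hode' := hode t ht
    have hb' := hb t ht
    have harg : (t + 1 + 1 : ℤ) = t + 2 := by ring
    have h2 : y (t + 1 + 1) - y (t + 1) =
        (1 - p t) * (y (t + 1) - y t) - q t * y t := by
      rw [harg]; linear_combination hode'
    have key : y (t+1) ^ 2 + (y (t+1+1) - y (t+1)) ^ 2 ≤
        (1 + 2*K + 2*K^2) * ((y t) ^ 2 + (y (t+1) - y t) ^ 2) := by
      rw [h2]
      set a := y t
      set b := y (t+1) - y t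
      have h1 : (a + b) ^ 2 ≤ 2 * (a^2 + b^2) := by nlinarith [sq_nonneg (a - b)]
      have hcs : ((1 - p t) * b - q t * a) ^ 2 ≤
          ((1 - p t)^2 + (q t)^2) * (a^2 + b^2) := by
        nlinarith [sq_nonneg ((1 - p t) * a + q t * b)]
      have hK2 : (1 - p t)^2 + (q t)^2 ≤ K^2 := by
        nlinarith [sq_abs (p t), sq_abs (q t), abs_nonneg (p t), abs_nonneg (q t),
          neg_abs_le (p t), le_abs_self (p t),
          mul_nonneg (abs_nonneg (p t)) (abs_nonneg (q t))]
      have hy : y (t+1) = a + b := by simp [a, b]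
      rw [hy]
      nlinarith [sq_nonneg a, sq_nonneg b, sq_nonneg (a + b)]
    have hz : t + 1 - t₀ = (t - t₀) + 1 := by ring
    rw [hz, zpow_add_one₀ (ne_of_gt hpos)]
    calc y (t+1) ^ 2 + (y (t+1+1) - y (t+1)) ^ 2
        ≤ (1 + 2*K + 2*K^2) * ((y t) ^ 2 + (y (t+1) - y t) ^ 2) := key
      _ ≤ (1 + 2*K + 2*K^2) * (((y t₀)^2 + (y (t₀+1) - y t₀)^2) * (1+2*K+2*K^2)^(t - t₀)) :=
          mul_le_mul_of_nonneg_left ih hpos.le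
      _ = ((y t₀)^2 + (y (t₀+1) - y t₀)^2) * ((1+2*K+2*K^2)^(t - t₀) * (1+2*K+2*K^2)) := by ring
end

section
/- Let p, q, r : ℝ → ℝ be continuous, and let y₁ : ℝ → ℝ be a twice continuously differentiable solution of y₁'' + p·y₁' + q·y₁ = 0 with y₁(t) ≠ 0 for all t in an interval I. Define P(t) := exp(∫_a^t p(s) ds) for some a ∈ I, and let y_d(t) := y₁(t) · ∫_a^t [ (1/(P(s) y₁(s)²)) · ∫_a^s r(τ) y₁(τ) P(τ) dτ ] ds. Then y_d'' + p·y_d' + q·y_d = r on I. -/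
theorem stmt_6 (p q r y₁ P yd : ℝ → ℝ) (I : Set ℝ) (a : ℝ)
    (hIo : IsOpen I) (hIc : I.OrdConnected) (haI : a ∈ I)
    (hp : Continuous p) (hq : Continuous q) (hr : Continuous r)
    (h1 : ∀ t ∈ I, DifferentiableAt ℝ y₁ t)
    (h2 : ∀ t ∈ I, DifferentiableAt ℝ (deriv y₁) t)
    (h2c : ContinuousOn (deriv (deriv y₁)) I)
    (hode : ∀ t ∈ I, deriv (deriv y₁) t + p t * deriv y₁ t + q t * y₁ t = 0)
    (hne : ∀ t ∈ I, y₁ t ≠ 0)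
    (hP : ∀ t, P t = Real.exp (∫ s in a..t, p s))
    (hyd : ∀ t, yd t = y₁ t *
      ∫ s in a..t, (1 / (P s * (y₁ s) ^ 2)) * ∫ τ in a..s, r τ * y₁ τ * P τ) :
    ∀ t ∈ I, deriv (deriv yd) t + p t * deriv yd t + q t * yd t = r t := by
  have hy₁c : ContinuousOn y₁ I := fun t ht => (h1 t ht).continuousAt.continuousWithinAt
  -- P has derivative p * P everywhere
  have hPd : ∀ t, HasDerivAt P (p t * P t) t := by
    intro t
    have hQ : HasDerivAt (fun u => ∫ s in a..u, p s) (p t) t :=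
      intervalIntegral.integral_hasDerivAt_right (hp.intervalIntegrable a t)
        (hp.stronglyMeasurable.stronglyMeasurableAtFilter) hp.continuousAt
    have hPe : P = fun u => Real.exp (∫ s in a..u, p s) := funext hP
    rw [hPe]
    simpa [hP t, mul_comm] using hQ.exp
  have hPc : Continuous P := by
    rw [continuous_iff_continuousAt]; exact fun t => (hPd t).continuousAt
  have hPne : ∀ t, P t ≠ 0 := fun t => by rw [hP]; exact (Real.exp_pos _).ne'
  set R : ℝ → ℝ := fun t => ∫ τ in a..t, r τ * y₁ τ * P τ with hRdef
  have hfRc : ContinuousOn (fun τ => r τ * y₁ τ * P τ) I :=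
    (hr.continuousOn.mul hy₁c).mul hPc.continuousOn
  have hRd : ∀ t ∈ I, HasDerivAt R (r t * y₁ t * P t) t := by
    intro t ht
    exact intervalIntegral.integral_hasDerivAt_right
      ((hfRc.mono (hIc.uIcc_subset haI ht)).intervalIntegrable)
      (AEStronglyMeasurable.stronglyMeasurableAtFilter_of_mem
        (hfRc.aestronglyMeasurable hIo.measurableSet) (hIo.mem_nhds ht))
      (hfRc.continuousAt (hIo.mem_nhds ht))
  have hRc : ContinuousOn R I := fun t ht => (hRd t ht).continuousAt.continuousWithinAt
  set f₂ : ℝ → ℝ := fun s => (1 / (P s * (y₁ s) ^ 2)) * R s with hf₂def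
  have hf₂c : ContinuousOn f₂ I := by
    apply ContinuousOn.mul _ hRc
    exact continuousOn_const.div (hPc.continuousOn.mul (hy₁c.pow 2))
      (fun s hs => mul_ne_zero (hPne s) (pow_ne_zero 2 (hne s hs)))
  set g : ℝ → ℝ := fun t => ∫ s in a..t, f₂ s with hgdef
  have hgd : ∀ t ∈ I, HasDerivAt g (f₂ t) t := by
    intro t ht
    exact intervalIntegral.integral_hasDerivAt_right
      ((hf₂c.mono (hIc.uIcc_subset haI ht)).intervalIntegrable)
      (AEStronglyMeasurable.stronglyMeasurableAtFilter_of_mem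
        (hf₂c.aestronglyMeasurable hIo.measurableSet) (hIo.mem_nhds ht))
      (hf₂c.continuousAt (hIo.mem_nhds ht))
  have hyde : yd = fun t => y₁ t * g t := funext hyd
  have hydd : ∀ t ∈ I, HasDerivAt yd (deriv y₁ t * g t + y₁ t * f₂ t) t := by
    intro t ht
    rw [hyde]
    exact (h1 t ht).hasDerivAt.mul (hgd t ht)
  set D : ℝ → ℝ := fun t => deriv y₁ t * g t + R t / (P t * y₁ t) with hDdef
  have hEq : Set.EqOn (deriv yd) D I := by
    intro s hs
    rw [(hydd s hs).deriv, hDdef]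
    have h1' := hne s hs
    have h2' := hPne s
    simp only [hf₂def]
    field_simp [hf₂def]
  intro t ht
  -- derivative of D at t
  have hPy₁ : HasDerivAt (fun s => P s * y₁ s) (p t * P t * y₁ t + P t * deriv y₁ t) t :=
    (hPd t).mul (h1 t ht).hasDerivAt
  have hquot : HasDerivAt (fun s => R s / (P s * y₁ s))
      ((r t * y₁ t * P t * (P t * y₁ t) - R t * (p t * P t * y₁ t + P t * deriv y₁ t))
        / (P t * y₁ t) ^ 2) t :=
    (hRd t ht).div hPy₁ (mul_ne_zero (hPne t) (hne t ht))
  have hDd : HasDerivAt D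
      (deriv (deriv y₁) t * g t + deriv y₁ t * f₂ t +
        (r t * y₁ t * P t * (P t * y₁ t) - R t * (p t * P t * y₁ t + P t * deriv y₁ t))
          / (P t * y₁ t) ^ 2) t :=
    ((h2 t ht).hasDerivAt.mul (hgd t ht)).add hquot
  have hdd : deriv (deriv yd) t = deriv D t := by
    apply Filter.EventuallyEq.deriv_eq
    exact Filter.eventuallyEq_of_mem (hIo.mem_nhds ht) hEq
  rw [hdd, hDd.deriv, hEq ht, hyd t]
  show _ + p t * (deriv y₁ t * g t + R t / (P t * y₁ t)) + q t * (y₁ t * g t) = r t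
  have hC : deriv (deriv y₁) t = -(p t * deriv y₁ t + q t * y₁ t) := by
    have := hode t ht; linarith
  rw [hC, hf₂def]
  have h1' := hne t ht
  have h2' := hPne t
  field_simp
  ring
end

section
/- Let α, β, r : ℤ → ℝ with β(t) ≠ 0 for all t, and let y₁ : ℤ → ℝ satisfy y₁(t+2) + α(t)y₁(t+1) + β(t)y₁(t) = 0 with y₁(t) ≠ 0 for all t ≥ a. Define B(t) := ∏_{j=a}^{t−1} β(j) and y_d(t) := y₁(t) · ∑_{x=a}^{t−1} [ B(x) · (∑_{s=a}^{x−1} r(s)y₁(s+1)/B(s+1)) / (y₁(x)y₁(x+1)) ]. Then y_d(t+2) + α(t)y_d(t+1) + β(t)y_d(t) = r(t) for all t ≥ a. -/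
private lemma sum_step {a t : ℤ} (h : a ≤ t) (g : ℤ → ℝ) :
    (∑ x ∈ Finset.Ico a (t + 1), g x) = (∑ x ∈ Finset.Ico a t, g x) + g t := by
  have : Finset.Ico a (t + 1) = insert t (Finset.Ico a t) := by
    ext x
    simp only [Finset.mem_Ico, Finset.mem_insert]
    omega
  rw [this, Finset.sum_insert Finset.right_notMem_Ico, add_comm]

private lemma prod_step {a t : ℤ} (h : a ≤ t) (g : ℤ → ℝ) :
    (∏ x ∈ Finset.Ico a (t + 1), g x) = (∏ x ∈ Finset.Ico a t, g x) * g t := by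
  have : Finset.Ico a (t + 1) = insert t (Finset.Ico a t) := by
    ext x
    simp only [Finset.mem_Ico, Finset.mem_insert]
    omega
  rw [this, Finset.prod_insert Finset.right_notMem_Ico, mul_comm]

theorem stmt_11 (α β r y₁ B yd : ℤ → ℝ) (a : ℤ)
    (hβ : ∀ t, β t ≠ 0)
    (hode : ∀ t, a ≤ t → y₁ (t + 2) + α t * y₁ (t + 1) + β t * y₁ t = 0)
    (hne : ∀ t, a ≤ t → y₁ t ≠ 0)
    (hB : ∀ t, B t = ∏ j ∈ Finset.Ico a t, β j)
    (hyd : ∀ t, yd t = y₁ t * ∑ x ∈ Finset.Ico a t,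
      B x * (∑ s ∈ Finset.Ico a x, r s * y₁ (s + 1) / B (s + 1)) / (y₁ x * y₁ (x + 1))) :
    ∀ t, a ≤ t → yd (t + 2) + α t * yd (t + 1) + β t * yd t = r t := by
  intro t ht
  have ht1 : a ≤ t + 1 := by linarith
  have hy0 := hne t ht
  have hy1 := hne (t + 1) ht1
  have hy2 := hne (t + 2) (by linarith)
  have hBt : B t ≠ 0 := by
    rw [hB]; exact Finset.prod_ne_zero_iff.mpr (fun j _ => hβ j)
  have hBt1 : B (t + 1) = B t * β t := by
    rw [hB, hB, prod_step ht β]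
  have hBt1' : B (t + 1) ≠ 0 := by
    rw [hBt1]; exact mul_ne_zero hBt (hβ t)
  set C : ℤ → ℝ := fun x => ∑ s ∈ Finset.Ico a x, r s * y₁ (s + 1) / B (s + 1) with hC
  set f : ℤ → ℝ := fun x => B x * C x / (y₁ x * y₁ (x + 1)) with hf
  have hCt1 : C (t + 1) = C t + r t * y₁ (t + 1) / B (t + 1) := by
    simp only [hC, sum_step ht _]
  have hS1 : (∑ x ∈ Finset.Ico a (t + 1), f x) = (∑ x ∈ Finset.Ico a t, f x) + f t :=
    sum_step ht f
  have hS2 : (∑ x ∈ Finset.Ico a (t + 2), f x)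
      = (∑ x ∈ Finset.Ico a t, f x) + f t + f (t + 1) := by
    have : t + 2 = (t + 1) + 1 := by ring
    rw [this, sum_step ht1 f, hS1]
  have he : y₁ (t + 2) = -(α t * y₁ (t + 1)) - β t * y₁ t := by
    have := hode t ht; linarith
  have hy2' : -(α t * y₁ (t + 1)) - β t * y₁ t ≠ 0 := he ▸ hy2
  rw [hyd (t + 2), hyd (t + 1), hyd t]
  show y₁ (t + 2) * (∑ x ∈ Finset.Ico a (t + 2), f x)
      + α t * (y₁ (t + 1) * ∑ x ∈ Finset.Ico a (t + 1), f x)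
      + β t * (y₁ t * ∑ x ∈ Finset.Ico a t, f x) = r t
  have h11 : t + 1 + 1 = t + 2 := by ring
  have hft : f t = B t * C t / (y₁ t * y₁ (t + 1)) := rfl
  have hft1 : f (t + 1)
      = (B t * β t * C t + r t * y₁ (t + 1)) / (y₁ (t + 1) * y₁ (t + 2)) := by
    simp only [hf]
    rw [h11, hCt1, hBt1, mul_add, mul_div_cancel₀ _ (mul_ne_zero hBt (hβ t))]
  rw [hS1, hS2, hft, hft1, he]
  generalize (∑ x ∈ Finset.Ico a t, f x) = S
  field_simp
  ring
end

section
/- Let α, β ∈ ℝ with β ≠ 0 and α² > β, and let λ := −α − √(α² − β) (assume λ ≠ 0). For r : ℤ → ℝ define y_d(t) := ∑_{x=a}^{t−1} ∑_{s=a}^{x−1} r(s) · λ^{t+s−2x} · β^{x−1−s} for t ≥ a. Then y_d(t+2) + 2α·y_d(t+1) + β·y_d(t) = r(t) for all t ≥ a. -/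
private lemma sum_Ico_top {M : Type*} [AddCommMonoid M] (f : ℤ → M) {a b : ℤ} (h : a ≤ b) :
    ∑ x ∈ Finset.Ico a (b + 1), f x = (∑ x ∈ Finset.Ico a b, f x) + f b := by
  have he : Finset.Ico a (b + 1) = insert b (Finset.Ico a b) := by
    ext x; simp only [Finset.mem_Ico, Finset.mem_insert]; omega
  rw [he, Finset.sum_insert (by simp), add_comm]

theorem stmt_12 (α β : ℝ) (hβ : β ≠ 0) (hαβ : β < α ^ 2)
    (lam : ℝ) (hlam : lam = -α - Real.sqrt (α ^ 2 - β)) (hlam0 : lam ≠ 0)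
    (r : ℤ → ℝ) (a : ℤ) (yd : ℤ → ℝ)
    (hyd : ∀ t, yd t = ∑ x ∈ Finset.Ico a t, ∑ s ∈ Finset.Ico a x,
      r s * lam ^ (t + s - 2 * x) * β ^ (x - 1 - s)) :
    ∀ t, a ≤ t → yd (t + 2) + 2 * α * yd (t + 1) + β * yd t = r t := by
  intro t ht
  have hs2 : Real.sqrt (α ^ 2 - β) ^ 2 = α ^ 2 - β := Real.sq_sqrt (by linarith)
  have hroot : lam ^ 2 + 2 * α * lam + β = 0 := by
    rw [hlam]; nlinarith [hs2]
  set g : ℤ → ℤ → ℝ := fun u x => ∑ s ∈ Finset.Ico a x,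
      r s * lam ^ (u + s - 2 * x) * β ^ (x - 1 - s) with hg
  have hgshift : ∀ u x, g (u + 1) x = lam * g u x := by
    intro u x
    rw [hg]
    simp only [Finset.mul_sum]
    apply Finset.sum_congr rfl
    intro s _
    have h1 : u + 1 + s - 2 * x = (u + s - 2 * x) + 1 := by ring
    rw [h1, zpow_add_one₀ hlam0]
    ring
  have hyd' : ∀ u, yd u = ∑ x ∈ Finset.Ico a u, g u x := fun u => hyd u
  have h1 : yd (t + 2) = (∑ x ∈ Finset.Ico a t, g (t+2) x) + g (t+2) t + g (t+2) (t+1) := by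
    rw [hyd']
    have e2 : t + 2 = (t + 1) + 1 := by ring
    rw [e2, sum_Ico_top _ (by omega), sum_Ico_top _ (by omega)]
  have h2 : yd (t + 1) = (∑ x ∈ Finset.Ico a t, g (t+1) x) + g (t+1) t := by
    rw [hyd', sum_Ico_top _ (by omega)]
  have h3 : yd t = ∑ x ∈ Finset.Ico a t, g t x := hyd' t
  have hkey : g (t+2) (t+1) = β * g t t + r t := by
    rw [hg]
    simp only
    rw [sum_Ico_top _ ht, Finset.mul_sum]
    congr 1
    · apply Finset.sum_congr rfl
      intro s _
      have e1 : t + 2 + s - 2 * (t + 1) = s - t := by ring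
      have e2 : t + 1 - 1 - s = (t - 1 - s) + 1 := by ring
      have e3 : t + s - 2 * t = s - t := by ring
      rw [e1, e2, e3, zpow_add_one₀ hβ]
      ring
    · have e1 : t + 2 + t - 2 * (t + 1) = 0 := by ring
      have e2 : t + 1 - 1 - t = 0 := by ring
      rw [e1, e2]
      simp
  have hg2 : ∀ x, g (t+2) x = lam^2 * g t x := by
    intro x
    have h := hgshift (t+1) x
    rw [show t+1+1 = t+2 by ring] at h
    rw [h, hgshift]
    ring
  rw [h1, h2, h3, hkey, hg2,
    Finset.sum_congr rfl (fun x _ => hg2 x),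
    Finset.sum_congr rfl (fun x _ => hgshift t x),
    hgshift, ← Finset.mul_sum, ← Finset.mul_sum]
  linear_combination ((∑ x ∈ Finset.Ico a t, g t x) + g t t) * hroot
end
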